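/- Let γ = [0; 1, 1, c_3, 1, c_5, 1, c_7, …] be irrational with c_{2n} = 1 for all n, c_1 = 1, and c_{2n+1} ∈ {1,2} for n ≥ 1. If c_{2n+1} = 2 with n ≥ 1, then q_{2n}(q_{2n}γ - p_{2n}) < 1/3, and moreover (2/π)·q_{2n}·tan((π/2)(q_{2n}γ - p_{2n})) < (4/π)(2 - √3). -/

import Mathlib

/-- Numerator of the `n`-th convergent of the continued fraction with
partial quotients `c`. -/
def convP (c : ℕ → ℤ) : ℕ → ℤ
  | 0 => c 0
  | 1 => c 1 * c 0 + 1
  | (n + 2) => c (n + 2) * convP c (n + 1) + convP c n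

/-- Denominator of the `n`-th convergent of the continued fraction with
partial quotients `c`. -/
def convQ (c : ℕ → ℤ) : ℕ → ℤ
  | 0 => 1
  | 1 => c 1
  | (n + 2) => c (n + 2) * convQ c (n + 1) + convQ c n

/-- `γ` has (infinite) continued fraction expansion `[c 0; c 1, c 2, ...]`:
all partial quotients with positive index are positive integers, and the
convergents tend to `γ`. -/
def IsCF (γ : ℝ) (c : ℕ → ℤ) : Prop :=
  (∀ n, 1 ≤ n → 1 ≤ c n) ∧
  Filter.Tendsto (fun n => (convP c n : ℝ) / (convQ c n : ℝ)) Filter.atTop (nhds γ)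

section CFAux
open Real Filter Set


lemma convP_rec (c : ℕ → ℤ) (k : ℕ) :
    convP c (k+2) = c (k+2) * convP c (k+1) + convP c k := rfl

lemma convQ_rec (c : ℕ → ℤ) (k : ℕ) :
    convQ c (k+2) = c (k+2) * convQ c (k+1) + convQ c k := rfl

section aux
variable {c : ℕ → ℤ} (hpos : ∀ n, 1 ≤ n → 1 ≤ c n)

include hpos

lemma convQ_pos : ∀ n, 1 ≤ convQ c n := by
  intro n
  induction n using Nat.strong_induction_on with
  | _ n ih =>
    match n with
    | 0 => simp [convQ]
    | 1 => simpa [convQ] using hpos 1 le_rfl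
    | (m+2) =>
      have h1 := ih (m+1) (by omega)
      have h2 := ih m (by omega)
      have h3 := hpos (m+2) (by omega)
      simp only [convQ]
      nlinarith

lemma convQ_mono_succ : ∀ n, convQ c n ≤ convQ c (n + 1) := by
  intro n
  match n with
  | 0 => simpa [convQ] using hpos 1 le_rfl
  | (m+1) =>
    have h1 := convQ_pos hpos (m+1)
    have h2 := convQ_pos hpos m
    have h3 := hpos (m+2) (by omega)
    simp only [convQ]
    nlinarith

lemma convQ_mono : Monotone (convQ c) :=
  monotone_nat_of_le_succ (convQ_mono_succ hpos)

omit hpos in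
lemma conv_det : ∀ k, convP c (k+1) * convQ c k - convP c k * convQ c (k+1) = (-1)^k := by
  intro k
  induction k with
  | zero => simp [convP, convQ]; ring
  | succ m ih =>
    simp only [convP, convQ] at *
    match m with
    | 0 => simp [convP, convQ] at *; linarith
    | (j+1) =>
      simp only [convP, convQ] at *
      push_cast
      ring_nf
      ring_nf at ih
      linarith [ih]

lemma conv_diff (k : ℕ) :
    (convP c (k+1) : ℝ) / (convQ c (k+1) : ℝ) - (convP c k : ℝ) / (convQ c k : ℝ)
      = (-1)^k / ((convQ c k : ℝ) * (convQ c (k+1) : ℝ)) := by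
  have h1 : (0:ℝ) < (convQ c k : ℝ) := by exact_mod_cast lt_of_lt_of_le one_pos (convQ_pos hpos k)
  have h2 : (0:ℝ) < (convQ c (k+1) : ℝ) := by exact_mod_cast lt_of_lt_of_le one_pos (convQ_pos hpos (k+1))
  have hd := conv_det (c := c) k
  have hd' : (convP c (k+1) : ℝ) * (convQ c k : ℝ) - (convP c k : ℝ) * (convQ c (k+1) : ℝ) = (-1)^k := by
    exact_mod_cast hd
  field_simp
  linear_combination hd'

lemma conv_det2 (k : ℕ) :
    convP c (k+2) * convQ c k - convP c k * convQ c (k+2) = (-1)^k * c (k+2) := by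
  have hd := conv_det (c := c) k
  simp only [convP, convQ]
  linear_combination (c (k+2)) * hd

lemma conv_diff2 (k : ℕ) :
    (convP c (k+2) : ℝ) / (convQ c (k+2) : ℝ) - (convP c k : ℝ) / (convQ c k : ℝ)
      = (-1)^k * (c (k+2) : ℝ) / ((convQ c k : ℝ) * (convQ c (k+2) : ℝ)) := by
  have h1 : (0:ℝ) < (convQ c k : ℝ) := by exact_mod_cast lt_of_lt_of_le one_pos (convQ_pos hpos k)
  have h2 : (0:ℝ) < (convQ c (k+2) : ℝ) := by exact_mod_cast lt_of_lt_of_le one_pos (convQ_pos hpos (k+2))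
  have hd : (convP c (k+2) : ℝ) * (convQ c k : ℝ) - (convP c k : ℝ) * (convQ c (k+2) : ℝ)
      = (-1)^k * (c (k+2) : ℝ) := by exact_mod_cast conv_det2 hpos k
  field_simp
  linear_combination hd

lemma even_lt_γ {γ : ℝ}
    (hlim : Tendsto (fun n => (convP c n : ℝ) / (convQ c n : ℝ)) atTop (nhds γ)) (k : ℕ) :
    (convP c (2*k) : ℝ) / (convQ c (2*k) : ℝ) < γ := by
  have hmono : Monotone (fun k => (convP c (2*k) : ℝ) / (convQ c (2*k) : ℝ)) := by
    apply monotone_nat_of_le_succ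
    intro j
    have hd := conv_diff2 hpos (2*j)
    have h1 : (0:ℝ) < (convQ c (2*j) : ℝ) := by exact_mod_cast lt_of_lt_of_le one_pos (convQ_pos hpos _)
    have h2 : (0:ℝ) < (convQ c (2*j+2) : ℝ) := by exact_mod_cast lt_of_lt_of_le one_pos (convQ_pos hpos _)
    have hc : (1:ℝ) ≤ (c (2*j+2) : ℝ) := by exact_mod_cast hpos (2*j+2) (by omega)
    have : (2*(j+1)) = 2*j + 2 := by omega
    rw [this]
    have hpow : ((-1:ℝ))^(2*j) = 1 := by
      rw [pow_mul]; norm_num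
    rw [hpow] at hd
    have : (0:ℝ) ≤ (c (2*j+2) : ℝ) / ((convQ c (2*j) : ℝ) * (convQ c (2*j+2) : ℝ)) := by
      positivity
    simp only [one_mul] at hd
    linarith
  have hsub : Tendsto (fun k => (convP c (2*k) : ℝ) / (convQ c (2*k) : ℝ)) atTop (nhds γ) := by
    exact hlim.comp (StrictMono.tendsto_atTop (fun a b h => by omega))
  have hle := hmono.ge_of_tendsto hsub (k+1)
  have hstrict : (convP c (2*k) : ℝ) / (convQ c (2*k) : ℝ)
      < (convP c (2*(k+1)) : ℝ) / (convQ c (2*(k+1)) : ℝ) := by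
    have hd := conv_diff2 hpos (2*k)
    have h1 : (0:ℝ) < (convQ c (2*k) : ℝ) := by exact_mod_cast lt_of_lt_of_le one_pos (convQ_pos hpos _)
    have h2 : (0:ℝ) < (convQ c (2*k+2) : ℝ) := by exact_mod_cast lt_of_lt_of_le one_pos (convQ_pos hpos _)
    have hc : (1:ℝ) ≤ (c (2*k+2) : ℝ) := by exact_mod_cast hpos (2*k+2) (by omega)
    have hpow : ((-1:ℝ))^(2*k) = 1 := by rw [pow_mul]; norm_num
    rw [hpow, one_mul] at hd
    have hpos' : (0:ℝ) < (c (2*k+2) : ℝ) / ((convQ c (2*k) : ℝ) * (convQ c (2*k+2) : ℝ)) := by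
      positivity
    have : (2*(k+1)) = 2*k + 2 := by omega
    rw [this]
    linarith
  linarith

lemma γ_lt_odd {γ : ℝ}
    (hlim : Tendsto (fun n => (convP c n : ℝ) / (convQ c n : ℝ)) atTop (nhds γ)) (k : ℕ) :
    γ < (convP c (2*k+1) : ℝ) / (convQ c (2*k+1) : ℝ) := by
  have hanti : Antitone (fun k => (convP c (2*k+1) : ℝ) / (convQ c (2*k+1) : ℝ)) := by
    apply antitone_nat_of_succ_le
    intro j
    have hd := conv_diff2 hpos (2*j+1)
    have h1 : (0:ℝ) < (convQ c (2*j+1) : ℝ) := by exact_mod_cast lt_of_lt_of_le one_pos (convQ_pos hpos _)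
    have h2 : (0:ℝ) < (convQ c (2*j+3) : ℝ) := by exact_mod_cast lt_of_lt_of_le one_pos (convQ_pos hpos _)
    have hc : (1:ℝ) ≤ (c (2*j+3) : ℝ) := by exact_mod_cast hpos (2*j+3) (by omega)
    have hpow : ((-1:ℝ))^(2*j+1) = -1 := by rw [pow_succ, pow_mul]; norm_num
    rw [hpow] at hd
    have h3 : (0:ℝ) ≤ (c (2*j+3) : ℝ) / ((convQ c (2*j+1) : ℝ) * (convQ c (2*j+3) : ℝ)) := by
      positivity
    have he : (2*(j+1)+1) = 2*j + 1 + 2 := by omega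
    rw [he]
    have he2 : (2*j+1+2) = 2*j+3 := by omega
    rw [he2] at hd ⊢
    have : -(1:ℝ) * (c (2*j+3) : ℝ) / ((convQ c (2*j+1) : ℝ) * (convQ c (2*j+3) : ℝ))
        = -((c (2*j+3) : ℝ) / ((convQ c (2*j+1) : ℝ) * (convQ c (2*j+3) : ℝ))) := by ring
    rw [this] at hd
    linarith
  have hsub : Tendsto (fun k => (convP c (2*k+1) : ℝ) / (convQ c (2*k+1) : ℝ)) atTop (nhds γ) := by
    exact hlim.comp (StrictMono.tendsto_atTop (fun a b h => by omega))
  have hle := hanti.le_of_tendsto hsub (k+1)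
  have hstrict : (convP c (2*(k+1)+1) : ℝ) / (convQ c (2*(k+1)+1) : ℝ)
      < (convP c (2*k+1) : ℝ) / (convQ c (2*k+1) : ℝ) := by
    have hd := conv_diff2 hpos (2*k+1)
    have h1 : (0:ℝ) < (convQ c (2*k+1) : ℝ) := by exact_mod_cast lt_of_lt_of_le one_pos (convQ_pos hpos _)
    have h2 : (0:ℝ) < (convQ c (2*k+3) : ℝ) := by exact_mod_cast lt_of_lt_of_le one_pos (convQ_pos hpos _)
    have hc : (1:ℝ) ≤ (c (2*k+3) : ℝ) := by exact_mod_cast hpos (2*k+3) (by omega)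
    have hpow : ((-1:ℝ))^(2*k+1) = -1 := by rw [pow_succ, pow_mul]; norm_num
    rw [hpow] at hd
    have h3 : (0:ℝ) < (c (2*k+3) : ℝ) / ((convQ c (2*k+1) : ℝ) * (convQ c (2*k+3) : ℝ)) := by
      positivity
    have he : (2*(k+1)+1) = 2*k + 1 + 2 := by omega
    rw [he]
    have he2 : (2*k+1+2) = 2*k+3 := by omega
    rw [he2] at hd ⊢
    have hr : -(1:ℝ) * (c (2*k+3) : ℝ) / ((convQ c (2*k+1) : ℝ) * (convQ c (2*k+3) : ℝ))
        = -((c (2*k+3) : ℝ) / ((convQ c (2*k+1) : ℝ) * (convQ c (2*k+3) : ℝ))) := by ring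
    rw [hr] at hd
    linarith
  linarith

end aux

end CFAux

section TanAux
open Real Set


lemma cos_pos_of_le_pi_div_twelve {x : ℝ} (h0 : 0 ≤ x) (h1 : x ≤ π/12) : 0 < cos x := by
  apply cos_pos_of_mem_Ioo
  constructor
  · linarith [pi_pos]
  · linarith [pi_pos]

lemma tan_pi_div_twelve : tan (π/12) = 2 - Real.sqrt 3 := by
  set t := tan (π/12) with ht
  have hs : Real.sqrt 3 ^ 2 = 3 := Real.sq_sqrt (by norm_num)
  have hs1 : (1:ℝ) < Real.sqrt 3 := by
    nlinarith [Real.sqrt_nonneg 3]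
  have htan6 : tan (π/6) = Real.sqrt 3 / 3 := by
    rw [Real.tan_eq_sin_div_cos, Real.sin_pi_div_six, Real.cos_pi_div_six]
    rw [div_eq_div_iff (by positivity) (by norm_num)]
    nlinarith
  have h2 : (2:ℝ) * (π/12) = π/6 := by ring
  have hdup : Real.sqrt 3 / 3 = 2 * t / (1 - t^2) := by
    rw [← htan6, ← h2, Real.tan_two_mul]
  have ht0 : 0 < t := by
    rw [ht]
    apply Real.tan_pos_of_pos_of_lt_pi_div_two
    · positivity
    · linarith [pi_pos]
  have ht1 : t < 1 := by
    have := Real.tan_lt_tan_of_nonneg_of_lt_pi_div_two (x := π/12) (y := π/4)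
      (by positivity) (by linarith [pi_pos]) (by linarith [pi_pos])
    rw [Real.tan_pi_div_four] at this
    exact this
  have hne : 1 - t^2 ≠ 0 := by nlinarith
  have heq : Real.sqrt 3 * (1 - t^2) = 6 * t := by
    field_simp at hdup
    linarith [hdup]
  -- t^2 + 2√3 t - 1 = 0  ⇒  (t - (2-√3))(t + (2+√3)) = 0
  have hfac : (t - (2 - Real.sqrt 3)) * (t + (2 + Real.sqrt 3)) = 0 := by
    have hs3 : (0:ℝ) < Real.sqrt 3 := by linarith
    nlinarith [heq, hs]
  rcases mul_eq_zero.1 hfac with h | h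
  · linarith
  · nlinarith

lemma tan_convex_bound {x : ℝ} (h0 : 0 ≤ x) (h1 : x ≤ π/12) :
    tan x ≤ 12 * (2 - Real.sqrt 3) / π * x := by
  have hπ : 0 < π := pi_pos
  have hconv : ConvexOn ℝ (Icc 0 (π/12)) tan := by
    apply MonotoneOn.convexOn_of_deriv (convex_Icc _ _)
    · apply Real.continuousOn_tan.mono
      intro y hy
      exact (cos_pos_of_le_pi_div_twelve hy.1 hy.2).ne'
    · rw [interior_Icc]
      intro y hy
      exact (Real.differentiableAt_tan.2
        (cos_pos_of_le_pi_div_twelve hy.1.le hy.2.le).ne').differentiableWithinAt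
    · rw [interior_Icc]
      intro a ha b hb hab
      rw [Real.deriv_tan, Real.deriv_tan]
      have hca : 0 < cos a := cos_pos_of_le_pi_div_twelve ha.1.le ha.2.le
      have hcb : 0 < cos b := cos_pos_of_le_pi_div_twelve hb.1.le hb.2.le
      have : cos b ≤ cos a := by
        apply Real.cos_le_cos_of_nonneg_of_le_pi ha.1.le (by linarith [hb.2]) hab
      have h2 : cos b ^ 2 ≤ cos a ^ 2 := by nlinarith
      apply one_div_le_one_div_of_le (by positivity) h2
  set T : ℝ := π/12 with hT
  have hTpos : 0 < T := by positivity
  have t := x / T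
  have hmem0 : (0:ℝ) ∈ Icc 0 T := by constructor <;> [rfl; linarith]
  have hmemT : T ∈ Icc 0 T := by constructor <;> [linarith; rfl]
  have hw1 : 0 ≤ 1 - x / T := by
    rw [sub_nonneg, div_le_one hTpos]; exact h1
  have hw2 : 0 ≤ x / T := by positivity
  have hsum : (1 - x / T) + x / T = 1 := by ring
  have := hconv.2 hmem0 hmemT hw1 hw2 hsum
  simp only [smul_eq_mul, mul_zero, zero_add] at this
  have hx : x / T * T = x := div_mul_cancel₀ x hTpos.ne'
  rw [hx, Real.tan_zero, mul_zero, zero_add] at this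
  rw [tan_pi_div_twelve] at this
  calc tan x ≤ x / T * (2 - Real.sqrt 3) := this
    _ = 12 * (2 - Real.sqrt 3) / π * x := by
        rw [hT]; field_simp

end TanAux

open Real

theorem stmt_16 (γ : ℝ) (hγ : Irrational γ) (c : ℕ → ℤ) (hcf : IsCF γ c)
    (hc0 : c 0 = 0) (hc1 : c 1 = 1)
    (heven : ∀ n, 1 ≤ n → c (2 * n) = 1)
    (hodd : ∀ n, 1 ≤ n → c (2 * n + 1) = 1 ∨ c (2 * n + 1) = 2)
    (n : ℕ) (hn : 1 ≤ n) (hc : c (2 * n + 1) = 2) :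
    (convQ c (2 * n) : ℝ) * ((convQ c (2 * n) : ℝ) * γ - (convP c (2 * n) : ℝ)) < 1 / 3 ∧
    (2 / π) * (convQ c (2 * n) : ℝ) *
        Real.tan (π / 2 * ((convQ c (2 * n) : ℝ) * γ - (convP c (2 * n) : ℝ))) <
      (4 / π) * (2 - Real.sqrt 3) := by
  obtain ⟨hpos, hlim⟩ := hcf
  obtain ⟨m, rfl⟩ : ∃ m, n = m + 1 := ⟨n - 1, by omega⟩
  set N := 2 * (m + 1) with hN
  -- basic positivity
  have hbZ : 1 ≤ convQ c N := convQ_pos hpos N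
  have hb : (0:ℝ) < (convQ c N : ℝ) := by exact_mod_cast lt_of_lt_of_le one_pos hbZ
  -- b ≥ 2
  have hq2 : convQ c 2 = 2 := by
    have h2 : c 2 = 1 := by simpa using heven 1 le_rfl
    show c 2 * convQ c 1 + convQ c 0 = 2
    rw [h2]
    show 1 * c 1 + 1 = 2
    rw [hc1]
    norm_num
  have hb2Z : (2:ℤ) ≤ convQ c N := by
    rw [← hq2]; exact convQ_mono hpos (by omega)
  have hb2 : (2:ℝ) ≤ (convQ c N : ℝ) := by exact_mod_cast hb2Z
  -- b ≤ 2a where a = convQ c (2m+1)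
  have haZ : 1 ≤ convQ c (2*m+1) := convQ_pos hpos _
  have hNeq : N = 2*m + 1 + 1 := by omega
  have hbval : convQ c N = convQ c (2*m+1) + convQ c (2*m) := by
    rw [hNeq]
    show convQ c (2*m + 2) = _
    simp only [convQ]
    have := heven (m+1) (by omega)
    rw [show 2*(m+1) = 2*m+2 from by omega] at this
    rw [this]; ring
  have hba : convQ c N ≤ 2 * convQ c (2*m+1) := by
    have := convQ_mono_succ hpos (2*m)
    omega
  -- recurrences for q at N+1, N+2, N+3
  have hcN1 : c (N + 1) = 2 := by rw [hN]; exact hc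
  have hcN2 : c (N + 2) = 1 := by
    have := heven (m+2) (by omega)
    rw [show 2*(m+2) = N + 2 from by omega] at this
    exact this
  have hcN3 : c (N + 3) = 1 ∨ c (N + 3) = 2 := by
    have := hodd (m+2) (by omega)
    rw [show 2*(m+2)+1 = N + 3 from by omega] at this
    exact this
  have hq1 : convQ c (N+1) = 2 * convQ c N + convQ c (2*m+1) := by
    rw [show N+1 = 2*m+1+2 from by omega, convQ_rec,
      show 2*m+1+2 = N+1 from by omega, show 2*m+1+1 = N from by omega, hcN1]
  have hq2' : convQ c (N+2) = 3 * convQ c N + convQ c (2*m+1) := by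
    rw [convQ_rec, hcN2, hq1]; ring
  have hq3 : convQ c (N+3) = c (N+3) * (3 * convQ c N + convQ c (2*m+1))
      + (2 * convQ c N + convQ c (2*m+1)) := by
    rw [show N+3 = N+1+2 from by omega, convQ_rec,
      show N+1+2 = N+3 from by omega, show N+1+1 = N+2 from by omega, hq2', hq1]
  -- determinant D = convP c (N+3) * convQ c N - convP c N * convQ c (N+3)
  have hdet1 : convP c (N+1) * convQ c N - convP c N * convQ c (N+1) = 1 := by
    have := conv_det (c := c) N
    rw [show ((-1:ℤ))^N = 1 from by rw [hN, pow_mul]; norm_num] at this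
    exact this
  have hdet2 : convP c (N+2) * convQ c N - convP c N * convQ c (N+2) = 1 := by
    have := conv_det2 hpos N
    rw [show ((-1:ℤ))^N = 1 from by rw [hN, pow_mul]; norm_num, hcN2] at this
    linarith
  have hdet3 : convP c (N+3) * convQ c N - convP c N * convQ c (N+3)
      = c (N+3) + 1 := by
    have e1 : convP c (N+3) = c (N+3) * convP c (N+2) + convP c (N+1) := by
      rw [show N+3 = N+1+2 from by omega, convP_rec,
        show N+1+2 = N+3 from by omega, show N+1+1 = N+2 from by omega]
    have e2 : convQ c (N+3) = c (N+3) * convQ c (N+2) + convQ c (N+1) := by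
      rw [show N+3 = N+1+2 from by omega, convQ_rec,
        show N+1+2 = N+3 from by omega, show N+1+1 = N+2 from by omega]
    rw [e1, e2]
    linear_combination (c (N+3)) * hdet2 + hdet1
  -- the key integer inequality 3 * b * (c(N+3)+1) ≤ q_{N+3}
  have hkeyZ : 3 * convQ c N * (c (N+3) + 1) ≤ convQ c (N+3) := by
    rcases hcN3 with h | h <;> rw [hq3, h] <;> nlinarith [haZ, hba, hbZ]
  -- γ bounds
  have hlow : (convP c N : ℝ) / (convQ c N : ℝ) < γ := by
    have := even_lt_γ hpos hlim (m+1)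
    rwa [← hN] at this
  have hupp : γ < (convP c (N+3) : ℝ) / (convQ c (N+3) : ℝ) := by
    have := γ_lt_odd hpos hlim (m+2)
    rwa [show 2*(m+2)+1 = N+3 from by omega] at this
  have hq3pos : (0:ℝ) < (convQ c (N+3) : ℝ) := by
    exact_mod_cast lt_of_lt_of_le one_pos (convQ_pos hpos (N+3))
  -- part 1
  have hdpos : 0 < (convQ c N : ℝ) * γ - (convP c N : ℝ) := by
    rw [div_lt_iff₀ hb] at hlow
    nlinarith
  have hd3 : ((convP c (N+3) : ℝ) * (convQ c N : ℝ) - (convP c N : ℝ) * (convQ c (N+3) : ℝ))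
      = ((c (N+3) : ℝ) + 1) := by exact_mod_cast hdet3
  have hk : (3:ℝ) * (convQ c N : ℝ) * ((c (N+3) : ℝ) + 1) ≤ (convQ c (N+3) : ℝ) := by
    exact_mod_cast hkeyZ
  have hγq : γ * (convQ c (N+3) : ℝ) < (convP c (N+3) : ℝ) := by
    rwa [lt_div_iff₀ hq3pos] at hupp
  have hpart1 : (convQ c N : ℝ) * ((convQ c N : ℝ) * γ - (convP c N : ℝ)) < 1/3 := by
    rw [← mul_lt_mul_iff_of_pos_right hq3pos]
    calc (convQ c N : ℝ) * ((convQ c N : ℝ) * γ - (convP c N : ℝ)) * (convQ c (N+3) : ℝ)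
        = (convQ c N : ℝ) * (convQ c N : ℝ) * (γ * (convQ c (N+3) : ℝ))
          - (convQ c N : ℝ) * (convP c N : ℝ) * (convQ c (N+3) : ℝ) := by ring
      _ < (convQ c N : ℝ) * (convQ c N : ℝ) * (convP c (N+3) : ℝ)
          - (convQ c N : ℝ) * (convP c N : ℝ) * (convQ c (N+3) : ℝ) := by
            have := mul_lt_mul_of_pos_left hγq (mul_pos hb hb)
            linarith
      _ = (convQ c N : ℝ) * ((convP c (N+3) : ℝ) * (convQ c N : ℝ)
          - (convP c N : ℝ) * (convQ c (N+3) : ℝ)) := by ring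
      _ = (convQ c N : ℝ) * ((c (N+3) : ℝ) + 1) := by rw [hd3]
      _ ≤ (convQ c (N+3) : ℝ) / 3 := by linarith [hk]
      _ = 1/3 * (convQ c (N+3) : ℝ) := by ring
  refine ⟨hpart1, ?_⟩
  -- part 2
  set d : ℝ := (convQ c N : ℝ) * γ - (convP c N : ℝ) with hdd
  clear_value d
  have hπ : (0:ℝ) < π := pi_pos
  have hd6 : d < 1/6 := by
    have h2d := mul_le_mul_of_nonneg_right hb2 hdpos.le
    linarith
  have harg0 : 0 ≤ π/2 * d := by
    have : 0 ≤ d := hdpos.le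
    positivity
  have harg1 : π/2 * d ≤ π/12 := by
    have h := mul_le_mul_of_nonneg_left hd6.le (by positivity : (0:ℝ) ≤ π/2)
    calc π/2 * d ≤ π/2 * (1/6) := h
      _ = π/12 := by ring
  have htan := tan_convex_bound harg0 harg1
  have hsqrt3 : Real.sqrt 3 < 2 := by
    nlinarith [Real.sq_sqrt (show (0:ℝ) ≤ 3 by norm_num), Real.sqrt_nonneg 3]
  have hsqrt0 : 0 ≤ Real.sqrt 3 := Real.sqrt_nonneg 3
  have htan' : Real.tan (π/2 * d) ≤ 6 * (2 - Real.sqrt 3) * d := by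
    have : 12 * (2 - Real.sqrt 3) / π * (π/2 * d) = 6 * (2 - Real.sqrt 3) * d := by
      field_simp; ring
    linarith [htan, this.symm.le]
  have hcoef : 0 ≤ (2/π) * (convQ c N : ℝ) := by positivity
  calc (2/π) * (convQ c N : ℝ) * Real.tan (π/2 * d)
      ≤ (2/π) * (convQ c N : ℝ) * (6 * (2 - Real.sqrt 3) * d) := by
        apply mul_le_mul_of_nonneg_left htan' hcoef
    _ = (12/π) * (2 - Real.sqrt 3) * ((convQ c N : ℝ) * d) := by ring
    _ < (12/π) * (2 - Real.sqrt 3) * (1/3) := by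
        apply mul_lt_mul_of_pos_left hpart1
        have : 0 < (2 - Real.sqrt 3) := by linarith
        positivity
    _ = (4/π) * (2 - Real.sqrt 3) := by ring
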